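/- arXiv:2110.09692 — 2 statements merged into one kernel-verified Lean document; each statement's English description precedes it below -/
import Mathlib

section
/- Let C, D ⊂ ℝ∖{0} be finite sets and let 𝓛 be the set of lines {y = cx+d : c ∈ C, d ∈ D}. Then the line energy satisfies E(𝓛) ≤ E^×(C)·E⁺(D). -/
open Classical in
private lemma count_fiber {α β : Type*} (A : Finset α) (B : Finset β) (f : α → ℝ) (g : β → ℝ)
    (T : Finset ℝ) (hT : A.image f ⊆ T) :
    ((A ×ˢ B).filter fun p => f p.1 = g p.2).card
      = ∑ t ∈ T, (A.filter fun a => f a = t).card * (B.filter fun b => g b = t).card := by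
  rw [Finset.card_eq_sum_card_fiberwise (f := fun p => f p.1) (t := T)
    (fun p hp => hT (Finset.mem_image_of_mem f (Finset.mem_product.1 (Finset.mem_filter.1 hp).1).1))]
  refine Finset.sum_congr rfl fun t _ => ?_
  rw [Finset.filter_filter, ← Finset.card_product, ← Finset.filter_product]
  congr 1
  apply Finset.filter_congr
  intro p _
  constructor
  · rintro ⟨h1, h2⟩; exact ⟨h2, h1.symm.trans h2⟩
  · rintro ⟨h1, h2⟩; exact ⟨h1.trans h2.symm, h1⟩

open Classical in
private lemma key (D : Finset ℝ) {c₁ c₃ : ℝ} (h₁ : c₁ ≠ 0) (h₃ : c₃ ≠ 0) :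
    (((D ×ˢ D) ×ˢ (D ×ˢ D)).filter fun p : (ℝ×ℝ)×(ℝ×ℝ) =>
        (p.1.2 - p.1.1) * c₃ = (p.2.2 - p.2.1) * c₁).card
      ≤ ((D ×ˢ D ×ˢ D ×ˢ D).filter fun p : ℝ×ℝ×ℝ×ℝ =>
        p.1 + p.2.1 = p.2.2.1 + p.2.2.2).card := by
  set A := D ×ˢ D with hA
  set f : ℝ × ℝ → ℝ := fun p => (p.2 - p.1) / c₁ with hf
  set g : ℝ × ℝ → ℝ := fun p => (p.2 - p.1) / c₃ with hg
  set T : Finset ℝ := A.image f ∪ A.image g with hT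
  -- the diagonal energy
  set E2 : ℕ := ((A ×ˢ A).filter fun p : (ℝ×ℝ)×(ℝ×ℝ) =>
      p.1.2 - p.1.1 = p.2.2 - p.2.1).card with hE2
  have step1 : ((A ×ˢ A).filter fun p : (ℝ×ℝ)×(ℝ×ℝ) =>
      (p.1.2 - p.1.1) * c₃ = (p.2.2 - p.2.1) * c₁).card
      = ∑ t ∈ T, (A.filter fun a => f a = t).card * (A.filter fun b => g b = t).card := by
    rw [← count_fiber A A f g T Finset.subset_union_left]
    congr 1
    apply Finset.filter_congr
    intro p _
    rw [hf, hg]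
    exact (div_eq_div_iff h₁ h₃).symm
  have stepA : ∑ t ∈ T, (A.filter fun a => f a = t).card * (A.filter fun b => f b = t).card
      = E2 := by
    rw [← count_fiber A A f f T Finset.subset_union_left, hE2]
    congr 1
    apply Finset.filter_congr
    intro p _
    rw [hf]
    simp only
    rw [div_eq_div_iff h₁ h₁]
    exact mul_left_inj' h₁
  have stepB : ∑ t ∈ T, (A.filter fun a => g a = t).card * (A.filter fun b => g b = t).card
      = E2 := by
    rw [← count_fiber A A g g T Finset.subset_union_right, hE2]
    congr 1
    apply Finset.filter_congr
    intro p _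
    rw [hg]
    simp only
    rw [div_eq_div_iff h₃ h₃]
    exact mul_left_inj' h₃
  have stepE : E2 ≤ ((D ×ˢ D ×ˢ D ×ˢ D).filter fun p : ℝ×ℝ×ℝ×ℝ =>
      p.1 + p.2.1 = p.2.2.1 + p.2.2.2).card := by
    apply Finset.card_le_card_of_injOn (fun p => (p.1.2, p.2.1, p.1.1, p.2.2))
    · intro p hp
      rw [Finset.mem_coe, Finset.mem_filter] at hp ⊢
      obtain ⟨hmem, hcond⟩ := hp
      rw [hA] at hmem
      simp only [Finset.mem_product] at hmem ⊢
      refine ⟨⟨hmem.1.2, hmem.2.1, hmem.1.1, hmem.2.2⟩, by linarith⟩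
    · intro p hp q hq h
      simp only [Prod.mk.injEq] at h
      obtain ⟨h1, h2, h3, h4⟩ := h
      exact Prod.ext (Prod.ext h3 h1) (Prod.ext h2 h4)
  -- combine: 2 * LHS ≤ 2 * E2
  have h2 : 2 * (((A ×ˢ A).filter fun p : (ℝ×ℝ)×(ℝ×ℝ) =>
      (p.1.2 - p.1.1) * c₃ = (p.2.2 - p.2.1) * c₁).card) ≤ 2 * E2 := by
    rw [step1, Finset.mul_sum]
    calc ∑ t ∈ T, 2 * ((A.filter fun a => f a = t).card * (A.filter fun b => g b = t).card)
        ≤ ∑ t ∈ T, ((A.filter fun a => f a = t).card ^ 2 + (A.filter fun a => g a = t).card ^ 2) := by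
          apply Finset.sum_le_sum
          intro t _
          have := two_mul_le_add_sq (A.filter fun a => f a = t).card (A.filter fun a => g a = t).card
          linarith [this]
      _ = 2 * E2 := by
          rw [Finset.sum_add_distrib]
          have e1 : ∑ t ∈ T, (A.filter fun a => f a = t).card ^ 2 = E2 := by
            rw [← stepA]; exact Finset.sum_congr rfl fun t _ => sq _
          have e2 : ∑ t ∈ T, (A.filter fun a => g a = t).card ^ 2 = E2 := by
            rw [← stepB]; exact Finset.sum_congr rfl fun t _ => sq _
          rw [e1, e2]; ring
  have hle : (((A ×ˢ A).filter fun p : (ℝ×ℝ)×(ℝ×ℝ) =>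
      (p.1.2 - p.1.1) * c₃ = (p.2.2 - p.2.1) * c₁).card) ≤ E2 := by omega
  exact hle.trans stepE

open Classical in
private lemma funeq_iff (c₁ c₂ c₃ c₄ d₁ d₂ d₃ d₄ : ℝ) (h₁ : c₁ ≠ 0) (h₃ : c₃ ≠ 0) :
    ((fun x : ℝ => (c₂ * x + d₂ - d₁) / c₁) = (fun x : ℝ => (c₄ * x + d₄ - d₃) / c₃))
    ↔ (c₂ * c₃ = c₁ * c₄ ∧ (d₂ - d₁) * c₃ = (d₄ - d₃) * c₁) := by
  constructor
  · intro h
    have h0 := congrFun h 0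
    have h1 := congrFun h 1
    simp only [mul_zero, mul_one, zero_add] at h0 h1
    rw [div_eq_div_iff h₁ h₃] at h0 h1
    constructor <;> nlinarith [h0, h1]
  · rintro ⟨ha, hb⟩
    funext x
    rw [div_eq_div_iff h₁ h₃]
    linear_combination x * ha + hb



open Classical in
/-- The line energy of a set of (non-axis-parallel) lines, where a line
`y = cx + d` is identified with the pair `(c, d)`: the number of quadruples
`(ℓ₁,ℓ₂,ℓ₃,ℓ₄)` with `f_{ℓ₁}⁻¹ ∘ f_{ℓ₂} = f_{ℓ₃}⁻¹ ∘ f_{ℓ₄}` as functions. -/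
noncomputable def lineEnergy (L : Finset (ℝ × ℝ)) : ℕ :=
  ((L ×ˢ L ×ˢ L ×ˢ L).filter fun q =>
    (fun x : ℝ => (q.2.1.1 * x + q.2.1.2 - q.1.2) / q.1.1) =
      (fun x : ℝ => (q.2.2.2.1 * x + q.2.2.2.2 - q.2.2.1.2) / q.2.2.1.1)).card

open Classical in
/-- For finite `C, D ⊆ ℝ∖{0}` and the set of lines `{y = cx + d : c ∈ C, d ∈ D}`,
we have `E(𝓛) ≤ E^×(C) · E⁺(D)`. -/
theorem lineEnergy_le_mulEnergy_mul_addEnergy (C D : Finset ℝ)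
    (hC : (0 : ℝ) ∉ C) (hD : (0 : ℝ) ∉ D) :
    lineEnergy (C ×ˢ D) ≤
      ((C ×ˢ C ×ˢ C ×ˢ C).filter fun p =>
        p.1 * p.2.1 = p.2.2.1 * p.2.2.2).card *
      ((D ×ˢ D ×ˢ D ×ˢ D).filter fun p =>
        p.1 + p.2.1 = p.2.2.1 + p.2.2.2).card := by
  set L := C ×ˢ D with hL
  set M := (C ×ˢ C ×ˢ C ×ˢ C).filter fun p : ℝ×ℝ×ℝ×ℝ =>
        p.1 * p.2.1 = p.2.2.1 * p.2.2.2 with hM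
  set addE := ((D ×ˢ D ×ˢ D ×ˢ D).filter fun p : ℝ×ℝ×ℝ×ℝ =>
        p.1 + p.2.1 = p.2.2.1 + p.2.2.2).card with haddE
  have hCne : ∀ c ∈ C, c ≠ 0 := fun c hc h => hC (h ▸ hc)
  have hmemL : ∀ p : ℝ × ℝ, p ∈ L → p.1 ∈ C ∧ p.2 ∈ D := by
    intro p hp; rwa [hL, Finset.mem_product] at hp
  -- Step A: rewrite the filter condition
  have stepA : lineEnergy (C ×ˢ D) = ((L ×ˢ L ×ˢ L ×ˢ L).filter fun q =>
      q.2.1.1 * q.2.2.1.1 = q.1.1 * q.2.2.2.1 ∧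
      (q.2.1.2 - q.1.2) * q.2.2.1.1 = (q.2.2.2.2 - q.2.2.1.2) * q.1.1).card := by
    unfold lineEnergy
    congr 1
    apply Finset.filter_congr
    intro q hq
    simp only [Finset.mem_product] at hq
    exact funeq_iff _ _ _ _ _ _ _ _ (hCne _ hq.1.1) (hCne _ hq.2.2.1.1)
  rw [stepA]
  set φ : ((ℝ×ℝ)×(ℝ×ℝ)×(ℝ×ℝ)×(ℝ×ℝ)) → ℝ×ℝ×ℝ×ℝ :=
    fun q => (q.2.1.1, q.2.2.1.1, q.1.1, q.2.2.2.1) with hφ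
  have hmap : ∀ q ∈ ((L ×ˢ L ×ˢ L ×ˢ L).filter fun q =>
      q.2.1.1 * q.2.2.1.1 = q.1.1 * q.2.2.2.1 ∧
      (q.2.1.2 - q.1.2) * q.2.2.1.1 = (q.2.2.2.2 - q.2.2.1.2) * q.1.1), φ q ∈ M := by
    intro q hq
    rw [Finset.mem_filter] at hq
    obtain ⟨hqm, hc, hd⟩ := hq
    simp only [Finset.mem_product] at hqm
    rw [hM, Finset.mem_filter]
    simp only [Finset.mem_product, hφ]
    exact ⟨⟨(hmemL _ hqm.2.1).1, (hmemL _ hqm.2.2.1).1, (hmemL _ hqm.1).1,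
      (hmemL _ hqm.2.2.2).1⟩, hc⟩
  rw [Finset.card_eq_sum_card_fiberwise hmap]
  refine le_trans (Finset.sum_le_card_nsmul _ _ addE ?_) (by rw [smul_eq_mul])
  intro k hk
  rw [hM, Finset.mem_filter] at hk
  simp only [Finset.mem_product] at hk
  have ha₁ : k.2.2.1 ≠ 0 := hCne _ hk.1.2.2.1
  have ha₃ : k.2.1 ≠ 0 := hCne _ hk.1.2.1
  refine le_trans ?_ (key D ha₁ ha₃)
  apply Finset.card_le_card_of_injOn
    (fun q => ((q.1.2, q.2.1.2), (q.2.2.1.2, q.2.2.2.2)))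
  · intro q hq
    rw [Finset.mem_coe, Finset.mem_filter] at hq
    obtain ⟨hq1, hqk⟩ := hq
    rw [Finset.mem_filter] at hq1
    obtain ⟨hqm, hc, hd⟩ := hq1
    simp only [Finset.mem_product] at hqm
    have e : q.2.1.1 = k.1 ∧ q.2.2.1.1 = k.2.1 ∧ q.1.1 = k.2.2.1 ∧ q.2.2.2.1 = k.2.2.2 := by
      have := hqk
      simp only [hφ, Prod.ext_iff] at this
      exact ⟨this.1, this.2.1, this.2.2.1, this.2.2.2⟩
    rw [Finset.mem_coe, Finset.mem_filter]
    simp only [Finset.mem_product]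
    refine ⟨⟨⟨(hmemL _ hqm.1).2, (hmemL _ hqm.2.1).2⟩, (hmemL _ hqm.2.2.1).2,
      (hmemL _ hqm.2.2.2).2⟩, ?_⟩
    rw [← e.2.1, ← e.2.2.1]
    exact hd
  · intro q hq q' hq' h
    simp only [Finset.mem_coe, Finset.mem_filter] at hq hq'
    have ek : φ q = φ q' := hq.2.trans hq'.2.symm
    simp only [hφ, Prod.ext_iff] at ek h
    obtain ⟨e1, e2, e3, e4⟩ := ek
    obtain ⟨⟨f1, f2⟩, f3, f4⟩ := h
    refine Prod.ext (Prod.ext e3 f1) (Prod.ext (Prod.ext e1 f2)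
      (Prod.ext (Prod.ext e2 f3) (Prod.ext e4 f4)))
end

section
/- Let C = {1,...,n^{1/3}} and D = {1,...,n^{2/3}} and let 𝓛 = {y = ax+b : a ∈ C, b ∈ D}. Then E(𝓛) = Ω(n^{8/3}); specifically, the quadruples with c₁ = c₃, c₂ = c₄ and d₂ − d₁ = d₄ − d₃ already contribute at least n^{2/3}·E⁺(D) = Ω(n^{8/3}) to the line energy. -/
theorem myGauss (k : ℕ) : (∑ i ∈ Finset.Icc 1 k, i) * 2 = k * (k+1) := by
  induction k with
  | zero => simp
  | succ n ih => rw [Finset.sum_Icc_succ_top (by omega)]; ring_nf; ring_nf at ih; omega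

theorem mySub (k : ℕ) : (∑ a ∈ Finset.Icc 1 k, (a - 1)) + k = ∑ i ∈ Finset.Icc 1 k, i := by
  induction k with
  | zero => simp
  | succ n ih =>
    have e1 : ∑ a ∈ Finset.Icc 1 (n+1), (a - 1)
        = (∑ a ∈ Finset.Icc 1 n, (a - 1)) + ((n+1)-1) := Finset.sum_Icc_succ_top (by omega) _
    have e2 : ∑ i ∈ Finset.Icc 1 (n+1), i
        = (∑ i ∈ Finset.Icc 1 n, i) + (n+1) := Finset.sum_Icc_succ_top (by omega) _
    omega

theorem tri (k : ℕ) : ∑ a ∈ Finset.Icc 1 k, ∑ b ∈ Finset.Icc 1 k, (a + b - 1) = k^3 := by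
  have hS := myGauss k
  have h2 := mySub k
  have h1 : ∀ a ∈ Finset.Icc 1 k, ∑ b ∈ Finset.Icc 1 k, (a + b - 1)
      = k * (a-1) + ∑ i ∈ Finset.Icc 1 k, i := by
    intro a ha
    simp only [Finset.mem_Icc] at ha
    rw [Finset.sum_congr rfl (fun b hb => show a + b - 1 = (a-1) + b by omega),
      Finset.sum_add_distrib, Finset.sum_const, Nat.card_Icc, smul_eq_mul]
    simp [mul_comm]
  rw [Finset.sum_congr rfl h1, Finset.sum_add_distrib, Finset.sum_const, ← Finset.mul_sum]
  set S := ∑ i ∈ Finset.Icc 1 k, i with hSdef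
  set T := ∑ a ∈ Finset.Icc 1 k, (a - 1) with hTdef
  have h5 : k * T + k * k = k * S := by rw [← Nat.mul_add, h2]
  have h6 : (k * S) * 2 = k * (k * (k+1)) := by rw [← hS]; ring
  simp only [Nat.card_Icc, smul_eq_mul]
  have h4 : k + 1 - 1 = k := by omega
  rw [h4]
  nlinarith [h5, h6]

open Classical in
/-- With `n = m³`, `C = {1,…,n^{1/3}}`, `D = {1,…,n^{2/3}}` and
`𝓛 = {y = ax + b : a ∈ C, b ∈ D}`, the quadruples with `c₁ = c₃`, `c₂ = c₄`
and `d₂ − d₁ = d₄ − d₃` contribute exactly `n^{2/3}·E⁺(D)` to `E(𝓛)`, and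
`n^{2/3}·E⁺(D) ≥ n^{8/3}/8`, so `E(𝓛) = Ω(n^{8/3})`. -/
theorem lineEnergy_elekes_lower (m : ℕ) (hm : 1 ≤ m) :
    let C : Finset ℝ := (Finset.Icc 1 m).image fun i => (i : ℝ)
    let D : Finset ℝ := (Finset.Icc 1 (m ^ 2)).image fun i => (i : ℝ)
    let L : Finset (ℝ × ℝ) := C ×ˢ D
    let eD : ℕ := ((D ×ˢ D ×ˢ D ×ˢ D).filter fun p =>
      p.1 + p.2.1 = p.2.2.1 + p.2.2.2).card
    m ^ 2 * eD ≤ lineEnergy L ∧ ((m : ℝ) ^ 3) ^ (8 / 3 : ℝ) / 8 ≤ (m ^ 2 * eD : ℕ) := by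
  intro C D L eD
  have hCeq : C = (Finset.Icc 1 m).image (fun i : ℕ => (i : ℝ)) := by
    ext x
    simp [C, Finset.pure_def, Finset.bind_def, Finset.sup_singleton_apply, Finset.image_id']
  have hDeq : D = (Finset.Icc 1 (m ^ 2)).image (fun i : ℕ => (i : ℝ)) := by
    ext x
    simp [D, Finset.pure_def, Finset.bind_def, Finset.sup_singleton_apply, Finset.image_id']
  have hC : C.card = m := by
    rw [hCeq, Finset.card_image_of_injective _ Nat.cast_injective, Nat.card_Icc]
    omega
  set Q : Finset (ℝ × ℝ × ℝ × ℝ) := (D ×ˢ D ×ˢ D ×ˢ D).filter fun p =>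
      p.1 + p.2.1 = p.2.2.1 + p.2.2.2 with hQ
  have heDQ : eD = Q.card := rfl
  constructor
  · -- first part: injection from C × C × Q into the line energy quadruples
    have key : (C ×ˢ C ×ˢ Q).card ≤ lineEnergy L := by
      unfold lineEnergy
      apply Finset.card_le_card_of_injOn
        (fun t => ((t.1, t.2.2.1), (t.2.1, t.2.2.2.2.1), (t.1, t.2.2.2.2.2), (t.2.1, t.2.2.2.1)))
      · rintro ⟨c, c', d1, d2, d3, d4⟩ ht
        simp only [Finset.mem_coe, Finset.mem_product, hQ, Finset.mem_filter] at ht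
        obtain ⟨hc, hc', ⟨h1, h2, h3, h4⟩, hsum⟩ := ht
        simp only [Finset.mem_coe, Finset.mem_filter, Finset.mem_product]
        refine ⟨⟨Finset.mem_product.mpr ⟨hc, h1⟩, Finset.mem_product.mpr ⟨hc', h3⟩,
          Finset.mem_product.mpr ⟨hc, h4⟩, Finset.mem_product.mpr ⟨hc', h2⟩⟩, ?_⟩
        funext x
        show (c' * x + d3 - d1) / c = (c' * x + d2 - d4) / c
        have : d1 + d2 = d3 + d4 := hsum
        congr 1
        linarith
      · rintro ⟨c, c', d1, d2, d3, d4⟩ _ ⟨e, e', f1, f2, f3, f4⟩ _ h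
        simp only [Prod.mk.injEq] at h
        obtain ⟨⟨g1, g2⟩, ⟨g3, g4⟩, ⟨_, g6⟩, _, g8⟩ := h
        subst g1; subst g2; subst g3; subst g4; subst g6; subst g8; rfl
    calc m ^ 2 * eD = (C ×ˢ C ×ˢ Q).card := by
          rw [Finset.card_product, Finset.card_product, hC, heDQ]; ring
      _ ≤ lineEnergy L := key
  · -- second part
    set k := (m ^ 2 + 1) / 2 with hk
    have hm1 : 1 ≤ m ^ 2 := by nlinarith
    have hkN : k ≤ m ^ 2 := by omega
    have h2k : m ^ 2 ≤ 2 * k := by omega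
    have h2k1 : 2 * k - 1 ≤ m ^ 2 := by omega
    have hcard : k ^ 3 ≤ eD := by
      have hle : ((Finset.Icc 1 k ×ˢ Finset.Icc 1 k).sigma
          (fun p => Finset.Icc 1 (p.1 + p.2 - 1))).card ≤ Q.card := by
        apply Finset.card_le_card_of_injOn
          (fun t => ((t.1.1 : ℝ), (t.1.2 : ℝ), (t.2 : ℝ), ((t.1.1 + t.1.2 - t.2 : ℕ) : ℝ)))
        · rintro ⟨⟨a, b⟩, c⟩ ht
          simp only [Finset.mem_coe, Finset.mem_sigma, Finset.mem_product, Finset.mem_Icc] at ht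
          obtain ⟨⟨⟨ha1, ha2⟩, hb1, hb2⟩, hc1, hc2⟩ := ht
          have hmemD : ∀ i : ℕ, 1 ≤ i → i ≤ m ^ 2 → (i : ℝ) ∈ D := by
            intro i h1 h2
            rw [hDeq]
            exact Finset.mem_image.mpr ⟨i, Finset.mem_Icc.mpr ⟨h1, h2⟩, rfl⟩
          simp only [Finset.mem_coe, hQ, Finset.mem_filter]
          constructor
          · exact Finset.mem_product.mpr ⟨hmemD a ha1 (by omega),
              Finset.mem_product.mpr ⟨hmemD b hb1 (by omega),
              Finset.mem_product.mpr ⟨hmemD c hc1 (by omega),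
                hmemD (a + b - c) (by omega) (by omega)⟩⟩⟩
          · show (a : ℝ) + (b : ℝ) = (c : ℝ) + ((a + b - c : ℕ) : ℝ)
            have hcab : c ≤ a + b := by omega
            rw [Nat.cast_sub hcab]
            push_cast
            ring
        · rintro ⟨⟨a, b⟩, c⟩ _ ⟨⟨a', b'⟩, c'⟩ _ h
          simp only [Prod.mk.injEq, Nat.cast_inj] at h
          obtain ⟨h1, h2, h3, _⟩ := h
          subst h1; subst h2; subst h3; rfl
      have hsig : ((Finset.Icc 1 k ×ˢ Finset.Icc 1 k).sigma
          (fun p => Finset.Icc 1 (p.1 + p.2 - 1))).card = k ^ 3 := by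
        rw [Finset.card_sigma]
        have hcongr : ∀ p ∈ Finset.Icc 1 k ×ˢ Finset.Icc 1 k,
            (Finset.Icc 1 (p.1 + p.2 - 1)).card = p.1 + p.2 - 1 := by
          intro p _; rw [Nat.card_Icc]; omega
        rw [Finset.sum_congr rfl hcongr, Finset.sum_product]
        exact tri k
      rw [heDQ, ← hsig]
      exact hle
    have hpow : ((m : ℝ) ^ 3) ^ (8 / 3 : ℝ) = (m : ℝ) ^ (8 : ℕ) := by
      rw [← Real.rpow_natCast (m : ℝ) 3, ← Real.rpow_mul (Nat.cast_nonneg m),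
        ← Real.rpow_natCast (m : ℝ) 8]
      norm_num
    rw [hpow]
    have hkR : ((m : ℝ) ^ 2) / 2 ≤ (k : ℝ) := by
      have : ((m ^ 2 : ℕ) : ℝ) ≤ 2 * (k : ℝ) := by exact_mod_cast h2k
      push_cast at this ⊢
      linarith
    have heD : ((k : ℝ)) ^ 3 ≤ (eD : ℝ) := by exact_mod_cast hcard
    have hkcube : (((m : ℝ) ^ 2) / 2) ^ 3 ≤ (k : ℝ) ^ 3 :=
      pow_le_pow_left₀ (by positivity) hkR 3
    push_cast
    have hm2 : (0 : ℝ) ≤ (m : ℝ) ^ 2 := by positivity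
    nlinarith [mul_le_mul_of_nonneg_left (le_trans hkcube heD) hm2]
end
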